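/- Let f(z) = z + z^e g(z) be a power series with g a power series with coefficients in O_p and e > 1. Then for every n ≥ 1 there exists a power series h_n with coefficients in O_p such that f^n(z) = z + n z^e g(z) + z^{2e-1} h_n(z). -/

import Mathlib

/-- Composition `f ∘ g` of formal power series (intended for `g` with zero
constant term). -/
noncomputable def PowerSeries.compose {R : Type*} [CommRing R] (f g : PowerSeries R) :
    PowerSeries R :=
  PowerSeries.mk fun n =>
    PowerSeries.coeff n
      (∑ k ∈ Finset.range (n + 1), PowerSeries.C (PowerSeries.coeff k f) * g ^ k)

section Aux

open PowerSeries Finset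

variable {K : Type*} [NormedField K] [IsUltrametricDist K]

/-- coefficients in the unit ball -/
def Stmt1Bdd (f : PowerSeries K) : Prop := ∀ i, ‖PowerSeries.coeff i f‖ ≤ 1

lemma stmt1bdd_add {f g : PowerSeries K} (hf : Stmt1Bdd f) (hg : Stmt1Bdd g) :
    Stmt1Bdd (f + g) := fun i => by
  rw [map_add]
  exact (IsUltrametricDist.norm_add_le_max _ _).trans (max_le (hf i) (hg i))

lemma stmt1bdd_sum {ι : Type*} {s : Finset ι} {f : ι → PowerSeries K}
    (hf : ∀ j ∈ s, Stmt1Bdd (f j)) : Stmt1Bdd (∑ j ∈ s, f j) := fun i => by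
  rw [map_sum]
  exact IsUltrametricDist.norm_sum_le_of_forall_le_of_nonneg zero_le_one
    fun j hj => hf j hj i

lemma stmt1bdd_mul {f g : PowerSeries K} (hf : Stmt1Bdd f) (hg : Stmt1Bdd g) :
    Stmt1Bdd (f * g) := fun i => by
  rw [coeff_mul]
  refine IsUltrametricDist.norm_sum_le_of_forall_le_of_nonneg zero_le_one fun p _ => ?_
  calc ‖coeff p.1 f * coeff p.2 g‖ ≤ ‖coeff p.1 f‖ * ‖coeff p.2 g‖ := norm_mul_le _ _
    _ ≤ 1 * 1 := mul_le_mul (hf _) (hg _) (norm_nonneg _) zero_le_one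
    _ = 1 := one_mul 1

lemma stmt1bdd_one : Stmt1Bdd (1 : PowerSeries K) := fun i => by
  rw [coeff_one]
  split <;> simp

lemma stmt1bdd_X : Stmt1Bdd (X : PowerSeries K) := fun i => by
  rw [coeff_X]
  split <;> simp

lemma stmt1bdd_pow {f : PowerSeries K} (hf : Stmt1Bdd f) (k : ℕ) : Stmt1Bdd (f ^ k) := by
  induction k with
  | zero => simpa using stmt1bdd_one
  | succ k ih => rw [pow_succ]; exact stmt1bdd_mul ih hf

lemma stmt1bdd_C {c : K} (hc : ‖c‖ ≤ 1) : Stmt1Bdd (C c) := fun i => by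
  rw [coeff_C]
  split <;> simpa

lemma stmt1bdd_neg {f : PowerSeries K} (hf : Stmt1Bdd f) : Stmt1Bdd (-f) := fun i => by
  rw [map_neg, norm_neg]; exact hf i

lemma stmt1bdd_compose {f w : PowerSeries K} (hf : Stmt1Bdd f) (hw : Stmt1Bdd w) :
    Stmt1Bdd (f.compose w) := fun i => by
  rw [PowerSeries.compose, coeff_mk]
  exact stmt1bdd_sum (fun k _ => stmt1bdd_mul (stmt1bdd_C (hf k)) (stmt1bdd_pow hw k)) i

lemma stmt1_coeff_zero_of_X_pow_dvd {p : PowerSeries K} {m d : ℕ}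
    (h : (X : PowerSeries K) ^ m ∣ p) (hd : d < m) : coeff d p = 0 :=
  X_pow_dvd_iff.mp h d hd

lemma stmt1_coeff_compose {w : PowerSeries K} (hw : constantCoeff w = 0)
    (f : PowerSeries K) (i N : ℕ) (h : i ≤ N) :
    coeff i (f.compose w) =
      coeff i (∑ k ∈ Finset.range (N + 1), C (coeff k f) * w ^ k) := by
  have hXw : (X : PowerSeries K) ∣ w := X_dvd_iff.mpr hw
  rw [PowerSeries.compose, coeff_mk, map_sum, map_sum]
  refine Finset.sum_subset (Finset.range_subset_range.mpr (by omega)) fun k _ hk => ?_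
  have hik : i < k := by simp only [Finset.mem_range] at hk ⊢; omega
  refine stmt1_coeff_zero_of_X_pow_dvd ?_ hik
  exact Dvd.dvd.mul_left (pow_dvd_pow_of_dvd hXw k) _

lemma stmt1_compose_add (f₁ f₂ w : PowerSeries K) :
    (f₁ + f₂).compose w = f₁.compose w + f₂.compose w := by
  ext i
  simp only [PowerSeries.compose, coeff_mk, map_add]
  rw [← map_add, ← Finset.sum_add_distrib]
  congr 1
  refine Finset.sum_congr rfl fun k _ => ?_
  ring

lemma stmt1_compose_X {w : PowerSeries K} (hw : constantCoeff w = 0) :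
    (X : PowerSeries K).compose w = w := by
  ext i
  rw [stmt1_coeff_compose hw X i (i + 1) (by omega)]
  rw [Finset.sum_eq_single 1]
  · simp
  · intro k _ hk
    rw [coeff_X, if_neg hk, map_zero, zero_mul]
  · intro h
    exact absurd (Finset.mem_range.mpr (by omega)) h

lemma stmt1_compose_X_pow_mul {w : PowerSeries K} (hw : constantCoeff w = 0)
    (e : ℕ) (g : PowerSeries K) :
    ((X : PowerSeries K) ^ e * g).compose w = w ^ e * g.compose w := by
  have hXw : (X : PowerSeries K) ∣ w := X_dvd_iff.mpr hw
  ext i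
  rw [stmt1_coeff_compose hw _ i (i + e) (by omega)]
  have hsplit : ∑ k ∈ Finset.range (i + e + 1), C (coeff k ((X : PowerSeries K) ^ e * g)) * w ^ k
      = w ^ e * ∑ j ∈ Finset.range (i + 1), C (coeff j g) * w ^ j := by
    have h1 : ∀ k ∈ Finset.Ico 0 e, C (coeff k ((X : PowerSeries K) ^ e * g)) * w ^ k = 0 := by
      intro k hk
      have hk' : k < e := (Finset.mem_Ico.mp hk).2
      rw [stmt1_coeff_zero_of_X_pow_dvd (dvd_mul_right _ g) hk', map_zero, zero_mul]
    calc ∑ k ∈ Finset.range (i + e + 1), C (coeff k ((X : PowerSeries K) ^ e * g)) * w ^ k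
        = ∑ k ∈ Finset.Ico e (i + e + 1), C (coeff k ((X : PowerSeries K) ^ e * g)) * w ^ k := by
          rw [Finset.range_eq_Ico,
            ← Finset.sum_Ico_consecutive _ (Nat.zero_le e) (by omega : e ≤ i + e + 1),
            Finset.sum_eq_zero h1, zero_add]
      _ = ∑ j ∈ Finset.range (i + e + 1 - e),
            C (coeff (e + j) ((X : PowerSeries K) ^ e * g)) * w ^ (e + j) := by
          rw [Finset.sum_Ico_eq_sum_range]
      _ = w ^ e * ∑ j ∈ Finset.range (i + 1), C (coeff j g) * w ^ j := by
          rw [show i + e + 1 - e = i + 1 by omega, Finset.mul_sum]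
          refine Finset.sum_congr rfl fun j _ => ?_
          rw [add_comm e j, coeff_X_pow_mul]
          ring
  rw [hsplit, coeff_mul, coeff_mul]
  refine Finset.sum_congr rfl fun p hp => ?_
  have hb : p.2 ≤ i := by
    have := Finset.HasAntidiagonal.mem_antidiagonal.mp hp
    omega
  rw [stmt1_coeff_compose hw g p.2 i hb]

lemma stmt1_pow_sub_pow_dvd {w : PowerSeries K} (hXw : (X : PowerSeries K) ∣ w)
    {m : ℕ} (hm : (X : PowerSeries K) ^ m ∣ w - X) (e : ℕ) (he : 1 ≤ e) :
    (X : PowerSeries K) ^ (m + (e - 1)) ∣ w ^ e - X ^ e := by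
  rw [← geom_sum₂_mul w X e, add_comm m, pow_add]
  refine mul_dvd_mul ?_ hm
  refine Finset.dvd_sum fun i hi => ?_
  have hi' : i < e := Finset.mem_range.mp hi
  have hsplit : (X : PowerSeries K) ^ (e - 1) = X ^ i * X ^ (e - 1 - i) := by
    rw [← pow_add]; congr 1; omega
  rw [hsplit]
  exact mul_dvd_mul (pow_dvd_pow_of_dvd hXw i) dvd_rfl

end Aux

/-- for `f(z) = z + z^e g(z)` with `g` having coefficients in
`O_p` and `e > 1`, for every `n ≥ 1` there is `h_n` with coefficients in `O_p`
such that `f^n(z) = z + n z^e g(z) + z^{2e-1} h_n(z)`. -/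
theorem stmt1 {K : Type*} [NormedField K] [IsUltrametricDist K] [CompleteSpace K]
    (e : ℕ) (he : 1 < e)
    (g : PowerSeries K) (hg : ∀ i, ‖PowerSeries.coeff i g‖ ≤ 1)
    (n : ℕ) (hn : 1 ≤ n) :
    ∃ h : PowerSeries K, (∀ i, ‖PowerSeries.coeff i h‖ ≤ 1) ∧
      (fun w => (PowerSeries.X + PowerSeries.X ^ e * g).compose w)^[n] PowerSeries.X
        = PowerSeries.X + (n : PowerSeries K) * (PowerSeries.X ^ e * g)
          + PowerSeries.X ^ (2 * e - 1) * h := by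
  classical
  open PowerSeries in
  set f : PowerSeries K := PowerSeries.X + PowerSeries.X ^ e * g with hfdef
  set F : ℕ → PowerSeries K := fun m => (fun w => f.compose w)^[m] PowerSeries.X with hFdef
  have hgB : Stmt1Bdd g := hg
  have hfB : Stmt1Bdd f :=
    stmt1bdd_add stmt1bdd_X (stmt1bdd_mul (stmt1bdd_pow stmt1bdd_X e) hgB)
  have key : ∀ m : ℕ, PowerSeries.constantCoeff (F m) = 0 ∧ Stmt1Bdd (F m) ∧
      (X : PowerSeries K) ^ (2 * e - 1) ∣
        (F m - X - (m : PowerSeries K) * (X ^ e * g)) := by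
    intro m
    induction m with
    | zero =>
      refine ⟨by simp [hFdef], by simpa [hFdef] using stmt1bdd_X, ?_⟩
      simp [hFdef]
    | succ m ih =>
      obtain ⟨h0, hB, hdvd⟩ := ih
      set w : PowerSeries K := F m with hw
      have hFs : F (m + 1) = f.compose w := by
        rw [hFdef]; exact Function.iterate_succ_apply' _ _ _
      have hXw : (X : PowerSeries K) ∣ w := PowerSeries.X_dvd_iff.mpr h0
      have hcomp : f.compose w = w + w ^ e * g.compose w := by
        rw [hfdef, stmt1_compose_add, stmt1_compose_X h0, stmt1_compose_X_pow_mul h0]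
      set G : PowerSeries K := g.compose w with hG
      have hXe_sub : (X : PowerSeries K) ^ e ∣ w - X := by
        have hrw : w - X = (m : PowerSeries K) * (X ^ e * g)
            + (w - X - (m : PowerSeries K) * (X ^ e * g)) := by ring
        rw [hrw]
        exact dvd_add ((dvd_mul_right _ g).mul_left _)
          (dvd_trans (pow_dvd_pow _ (by omega : e ≤ 2 * e - 1)) hdvd)
      refine ⟨?_, ?_, ?_⟩
      · rw [hFs, hcomp]
        simp [map_add, map_mul, map_pow, h0, zero_pow (by omega : e ≠ 0)]
      · rw [hFs]
        exact stmt1bdd_compose hfB hB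
      · have hpow : (X : PowerSeries K) ^ (2 * e - 1) ∣ w ^ e - X ^ e := by
          have h2 := stmt1_pow_sub_pow_dvd hXw hXe_sub e (by omega)
          have h3 : 2 * e - 1 = e + (e - 1) := by omega
          rw [h3]; exact h2
        have hk_all : ∀ k : ℕ, (X : PowerSeries K) ^ e ∣ w ^ k - X ^ k := by
          intro k
          rcases Nat.eq_zero_or_pos k with rfl | hk
          · simp
          · exact dvd_trans (pow_dvd_pow _ (by omega : e ≤ e + (k - 1)))
              (stmt1_pow_sub_pow_dvd hXw hXe_sub k hk)
        have hGg : (X : PowerSeries K) ^ (e - 1) ∣ G - g := by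
          rw [PowerSeries.X_pow_dvd_iff]
          intro d hd
          rw [map_sub]
          have hcd : PowerSeries.coeff d G = PowerSeries.coeff d g := by
            rw [hG, stmt1_coeff_compose h0 g d d le_rfl, map_sum]
            have hterm : ∀ k ∈ Finset.range (d + 1),
                PowerSeries.coeff d (PowerSeries.C (PowerSeries.coeff k g) * w ^ k)
                  = PowerSeries.coeff k g *
                    PowerSeries.coeff d ((X : PowerSeries K) ^ k) := by
              intro k _
              rw [PowerSeries.coeff_C_mul]
              congr 1
              have := stmt1_coeff_zero_of_X_pow_dvd (hk_all k) (by omega : d < e)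
              rw [map_sub] at this
              exact sub_eq_zero.mp this
            rw [Finset.sum_congr rfl hterm]
            rw [Finset.sum_eq_single d]
            · rw [PowerSeries.coeff_X_pow, if_pos rfl, mul_one]
            · intro k _ hkd
              rw [PowerSeries.coeff_X_pow, if_neg (fun h => hkd h.symm), mul_zero]
            · intro hmem
              exact absurd (Finset.mem_range.mpr (by omega)) hmem
          rw [hcd, sub_self]
        have heq : F (m + 1) - X - ((m + 1 : ℕ) : PowerSeries K) * (X ^ e * g)
            = (w - X - (m : PowerSeries K) * (X ^ e * g))
              + ((w ^ e - X ^ e) * G + X ^ e * (G - g)) := by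
          rw [hFs, hcomp]; push_cast; ring
        rw [heq]
        refine dvd_add hdvd (dvd_add (hpow.mul_right G) ?_)
        have h4 : (X : PowerSeries K) ^ (2 * e - 1) = X ^ e * X ^ (e - 1) := by
          rw [← pow_add]; congr 1; omega
        rw [h4]
        exact mul_dvd_mul dvd_rfl hGg
  obtain ⟨h0, hB, hdvd⟩ := key n
  obtain ⟨q, hq⟩ := hdvd
  have hDB : Stmt1Bdd (F n - X - (n : PowerSeries K) * (X ^ e * g)) := by
    have hnB : Stmt1Bdd ((n : PowerSeries K)) := by
      have : ((n : K⟦X⟧)) = PowerSeries.C ((n : K)) := by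
        rw [map_natCast]
      rw [this]
      exact stmt1bdd_C (IsUltrametricDist.norm_natCast_le_one K n)
    have : F n - X - (n : PowerSeries K) * (X ^ e * g)
        = F n + (-X) + (-((n : PowerSeries K) * (X ^ e * g))) := by ring
    rw [this]
    exact stmt1bdd_add (stmt1bdd_add hB (stmt1bdd_neg stmt1bdd_X))
      (stmt1bdd_neg (stmt1bdd_mul hnB (stmt1bdd_mul (stmt1bdd_pow stmt1bdd_X e) hgB)))
  refine ⟨q, ?_, ?_⟩
  · intro i
    have hc := congrArg (PowerSeries.coeff (i + (2 * e - 1))) hq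
    rw [PowerSeries.coeff_X_pow_mul] at hc
    rw [← hc]
    exact hDB _
  · have := hq
    linear_combination this
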